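/- For the regular octahedral coordination geometry (k = 6 bonds along ±e₁, ±e₂, ±e₃), the set of bond angles over the 15 unordered bond pairs has exactly 2 elements (π/2 and π), so its extracopularity coefficient is E = log₂(15/2). -/

import Mathlib

open scoped RealInnerProductSpace

noncomputable def v3 (a b c : ℝ) : EuclideanSpace ℝ (Fin 3) := (WithLp.equiv 2 _).symm ![a, b, c]

/-- The regular octahedral coordination geometry: bonds `±e₁, ±e₂, ±e₃`. -/
noncomputable def octS : Set (EuclideanSpace ℝ (Fin 3)) :=
  {v3 1 0 0, v3 (-1) 0 0, v3 0 1 0, v3 0 (-1) 0, v3 0 0 1, v3 0 0 (-1)}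

/-- Set of bond angles of a coordination geometry. -/
def angleSet (S : Set (EuclideanSpace ℝ (Fin 3))) : Set ℝ :=
  {θ | ∃ b ∈ S, ∃ b' ∈ S, b ≠ b' ∧ θ = Real.arccos ⟪b, b'⟫}

lemma inner_v3 (a b c d e f : ℝ) : ⟪v3 a b c, v3 d e f⟫ = a*d + b*e + c*f := by
  simp [v3, PiLp.inner_apply, Fin.sum_univ_three]; ring

lemma v3_inj {a b c d e f : ℝ} (h : v3 a b c = v3 d e f) : a = d ∧ b = e ∧ c = f := by
  have h' : (![a,b,c] : Fin 3 → ℝ) = ![d,e,f] := congrArg (WithLp.equiv 2 _) h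
  exact ⟨congrFun h' 0, congrFun h' 1, congrFun h' 2⟩

lemma v3_ne {a b c d e f : ℝ} (h : ¬(a = d ∧ b = e ∧ c = f)) : v3 a b c ≠ v3 d e f :=
  fun he => h (v3_inj he)

/-- The octahedral geometry has exactly the two bond angles `π/2` and `π` among its
`15` bond pairs, so its extracopularity coefficient is `E = log₂(15/2)`. -/
theorem octahedral_angles :
    angleSet octS = {Real.pi / 2, Real.pi} ∧ (angleSet octS).ncard = 2 ∧
    Real.logb 2 15 - Real.logb 2 ((angleSet octS).ncard) = Real.logb 2 (15 / 2) := by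
  have hset : angleSet octS = {Real.pi / 2, Real.pi} := by
    ext θ
    constructor
    · rintro ⟨b, hb, b', hb', hne, rfl⟩
      simp only [octS, Set.mem_insert_iff, Set.mem_singleton_iff] at hb hb'
      rcases hb with rfl|rfl|rfl|rfl|rfl|rfl <;>
        rcases hb' with rfl|rfl|rfl|rfl|rfl|rfl <;>
        first
          | exact absurd rfl hne
          | (simp only [inner_v3]; norm_num [Real.arccos_zero, Real.arccos_neg_one])
    · rintro (rfl|rfl)
      · refine ⟨v3 1 0 0, by simp [octS], v3 0 1 0, by simp [octS],
          v3_ne (by norm_num), ?_⟩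
        simp only [inner_v3]; norm_num [Real.arccos_zero]
      · refine ⟨v3 1 0 0, by simp [octS], v3 (-1) 0 0, by simp [octS],
          v3_ne (by norm_num), ?_⟩
        simp only [inner_v3]; norm_num [Real.arccos_neg_one]
  have hcard : (angleSet octS).ncard = 2 := by
    rw [hset]
    rw [Set.ncard_pair (by have := Real.pi_pos; intro h; linarith)]
  refine ⟨hset, hcard, ?_⟩
  rw [hcard]
  rw [Real.logb_div (by norm_num) (by norm_num)]
  norm_num
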